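/- Every polyhedral loss L : ℝ^d → ℝ^𝒴 embeds some discrete loss; that is, there exist a finite set ℛ and a discrete loss ℓ : ℛ → ℝ^𝒴 such that L embeds ℓ. -/

import Mathlib

open scoped Classical

section Abstract

variable {V : Type*} [AddCommGroup V] [Module ℝ V] {ι : Type*} [Fintype ι]

/-- Feasibility for the system `A k z + b k ≤ 0`. -/
def Feas (A : ι → V →ₗ[ℝ] ℝ) (b : ι → ℝ) (z : V) : Prop := ∀ k, A k z + b k ≤ 0

/-- A candidate point for each subset `J` of constraints: some feasible point where all
constraints in `J` are tight, if one exists. -/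
noncomputable def cand (A : ι → V →ₗ[ℝ] ℝ) (b : ι → ℝ) (J : Finset ι) : V :=
  if h : ∃ z, Feas A b z ∧ ∀ k ∈ J, A k z + b k = 0 then h.choose else 0

lemma cand_spec {A : ι → V →ₗ[ℝ] ℝ} {b : ι → ℝ} {J : Finset ι}
    (h : ∃ z, Feas A b z ∧ ∀ k ∈ J, A k z + b k = 0) :
    Feas A b (cand A b J) ∧ ∀ k ∈ J, A k (cand A b J) + b k = 0 := by
  rw [cand, dif_pos h]; exact h.choose_spec

lemma candidates_aux (A : ι → V →ₗ[ℝ] ℝ) (b : ι → ℝ) (c : V →ₗ[ℝ] ℝ)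
    (hb : ∀ z, Feas A b z → 0 ≤ c z) :
    ∀ n : ℕ, ∀ z, Feas A b z →
      (Finset.univ.filter (fun k => A k z + b k ≠ 0)).card < n →
      ∃ J : Finset ι, Feas A b (cand A b J) ∧ c (cand A b J) ≤ c z := by
  intro n
  induction n with
  | zero => intro z hz hcard; omega
  | succ n IH =>
    intro z hz hcard
    set J : Finset ι := Finset.univ.filter (fun k => A k z + b k = 0) with hJ
    by_cases hc : ∃ w, (∀ k ∈ J, A k w = 0) ∧ c w < 0
    · obtain ⟨w, hw, hcw⟩ := hc
      have hwJ : ∀ k, A k z + b k = 0 → A k w = 0 := by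
        intro k hk
        exact hw k (by simp [hJ, hk])
      set T : Finset ι := Finset.univ.filter (fun k => 0 < A k w) with hT
      rcases T.eq_empty_or_nonempty with hTe | hTne
      · -- the objective is unbounded below: contradiction
        exfalso
        have hcz : 0 ≤ c z := hb z hz
        have hcw' : 0 < -(c w) := by linarith
        set t : ℝ := (c z + 1) / (-(c w)) with ht
        have ht0 : 0 < t := div_pos (by linarith) hcw'
        have hfeas : Feas A b (z + t • w) := by
          intro k
          have hk : A k w ≤ 0 := by
            by_contra h
            have : k ∈ T := by simp [hT]; linarith
            simp [hTe] at this
          have h1 := hz k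
          have h2 : A k (z + t • w) + b k = (A k z + b k) + t * A k w := by
            simp [map_add, map_smul, smul_eq_mul]; ring
          rw [h2]; nlinarith
        have h3 := hb _ hfeas
        have hval : c (z + t • w) = c z + t * c w := by
          simp [map_add, map_smul, smul_eq_mul]
        have hkey : c z + t * c w = -1 := by
          rw [ht, div_neg, neg_mul, div_mul_cancel₀ _ (ne_of_lt hcw)]; ring
        rw [hval, hkey] at h3; linarith
      · obtain ⟨k₀, hk₀T, hk₀min⟩ :=
          T.exists_min_image (fun k => (-(A k z + b k)) / (A k w)) hTne
        have hk₀w : 0 < A k₀ w := by simpa [hT] using hk₀T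
        have hk₀z : A k₀ z + b k₀ < 0 := by
          rcases lt_or_eq_of_le (hz k₀) with h | h
          · exact h
          · exact absurd (hwJ k₀ h) (by linarith)
        set t : ℝ := (-(A k₀ z + b k₀)) / (A k₀ w) with ht
        have ht0 : 0 < t := div_pos (by linarith) hk₀w
        set z' : V := z + t • w with hz'def
        have hlin : ∀ k, A k z' + b k = (A k z + b k) + t * A k w := by
          intro k; simp [hz'def, map_add, map_smul, smul_eq_mul]; ring
        have hz' : Feas A b z' := by
          intro k
          rw [hlin k]
          rcases le_or_gt (A k w) 0 with h | h
          · nlinarith [hz k]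
          · have hkT : k ∈ T := by simp [hT]; linarith
            have h2 : t * A k w ≤ -(A k z + b k) := (le_div_iff₀ h).mp (hk₀min k hkT)
            linarith
        have hk₀' : A k₀ z' + b k₀ = 0 := by
          rw [hlin k₀, ht, div_mul_cancel₀]
          · ring
          · exact ne_of_gt hk₀w
        have hsub : (Finset.univ.filter (fun k => A k z' + b k ≠ 0)) ⊂
            (Finset.univ.filter (fun k => A k z + b k ≠ 0)) := by
          constructor
          · intro k hk
            simp only [Finset.mem_filter, Finset.mem_univ, true_and] at hk ⊢
            intro h0
            exact hk (by rw [hlin k, h0, hwJ k h0]; ring)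
          · intro hsup
            have hk₀mem : k₀ ∈ Finset.univ.filter (fun k => A k z + b k ≠ 0) := by
              simp only [Finset.mem_filter, Finset.mem_univ, true_and]
              exact ne_of_lt hk₀z
            have := hsup hk₀mem
            simp only [Finset.mem_filter, Finset.mem_univ, true_and] at this
            exact this hk₀'
        have hcard' : (Finset.univ.filter (fun k => A k z' + b k ≠ 0)).card < n := by
          have := Finset.card_lt_card hsub
          omega
        obtain ⟨J', hJ'f, hJ'le⟩ := IH z' hz' hcard'
        refine ⟨J', hJ'f, ?_⟩
        have hval : c z' = c z + t * c w := by
          simp [hz'def, map_add, map_smul, smul_eq_mul]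
        nlinarith
    · push_neg at hc
      have hex : ∃ z', Feas A b z' ∧ ∀ k ∈ J, A k z' + b k = 0 :=
        ⟨z, hz, fun k hk => by simpa [hJ] using (Finset.mem_filter.mp hk).2⟩
      obtain ⟨hfc, hac⟩ := cand_spec hex
      refine ⟨J, hfc, ?_⟩
      have h1 : ∀ k ∈ J, A k (z - cand A b J) = 0 := by
        intro k hk
        have h2 := hac k hk
        have h3 : A k z + b k = 0 := by simpa [hJ] using (Finset.mem_filter.mp hk).2
        simp only [map_sub]
        linarith
      have := hc _ h1
      simp only [map_sub] at this
      linarith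

lemma candidates_main (A : ι → V →ₗ[ℝ] ℝ) (b : ι → ℝ) (c : V →ₗ[ℝ] ℝ)
    (hb : ∀ z, Feas A b z → 0 ≤ c z) (z : V) (hz : Feas A b z) :
    ∃ J : Finset ι, Feas A b (cand A b J) ∧ c (cand A b J) ≤ c z :=
  candidates_aux A b c hb _ z hz (Nat.lt_succ_self _)

end Abstract

section App

variable {Y : Type*} [Fintype Y] {d : ℕ}

/-- The linear part of the constraint "(y,i)-th affine piece at u is at most t y". -/
def Amap (mm : Y → ℕ) (aa : ∀ y, Fin (mm y + 1) → Fin d → ℝ)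
    (k : (y : Y) × Fin (mm y + 1)) : ((Fin d → ℝ) × (Y → ℝ)) →ₗ[ℝ] ℝ where
  toFun z := (∑ j, aa k.1 k.2 j * z.1 j) - z.2 k.1
  map_add' z w := by
    simp only [Prod.fst_add, Prod.snd_add, Pi.add_apply, mul_add,
      Finset.sum_add_distrib]
    ring
  map_smul' r z := by
    simp only [Prod.smul_fst, Prod.smul_snd, Pi.smul_apply, smul_eq_mul,
      RingHom.id_apply]
    rw [mul_sub, Finset.mul_sum]
    congr 1
    exact Finset.sum_congr rfl fun j _ => by ring

@[simp] lemma Amap_apply (mm : Y → ℕ) (aa : ∀ y, Fin (mm y + 1) → Fin d → ℝ)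
    (k : (y : Y) × Fin (mm y + 1)) (z : (Fin d → ℝ) × (Y → ℝ)) :
    Amap mm aa k z = (∑ j, aa k.1 k.2 j * z.1 j) - z.2 k.1 := rfl

/-- The objective `z ↦ ∑ y, p y * t y`. -/
def cmap (p : Y → ℝ) : ((Fin d → ℝ) × (Y → ℝ)) →ₗ[ℝ] ℝ where
  toFun z := ∑ y, p y * z.2 y
  map_add' z w := by
    simp only [Prod.snd_add, Pi.add_apply, mul_add, Finset.sum_add_distrib]
  map_smul' r z := by
    simp only [Prod.smul_snd, Pi.smul_apply, smul_eq_mul, RingHom.id_apply,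
      Finset.mul_sum]
    exact Finset.sum_congr rfl fun y _ => by ring

@[simp] lemma cmap_apply (p : Y → ℝ) (z : (Fin d → ℝ) × (Y → ℝ)) :
    cmap p z = ∑ y, p y * z.2 y := rfl

end App



/-- The probability simplex over a finite outcome set `Y`. -/
def probSimplex (Y : Type*) [Fintype Y] : Set (Y → ℝ) :=
  {p | (∀ y, 0 ≤ p y) ∧ ∑ y, p y = 1}

/-- Expected loss `⟨p, v⟩ = ∑ y, p y * v y`. -/
def elloss {Y : Type*} [Fintype Y] (p : Y → ℝ) (v : Y → ℝ) : ℝ :=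
  ∑ y, p y * v y

/-- `u` minimizes the expected loss `⟨p, L ·⟩` over the report set. -/
def Minimizes {U Y : Type*} [Fintype Y] (p : Y → ℝ) (L : U → Y → ℝ) (u : U) : Prop :=
  ∀ u' : U, elloss p (L u) ≤ elloss p (L u')

/-- The Bayes risk `inf_u ⟨p, L u⟩`. -/
noncomputable def bayesRisk {U Y : Type*} [Fintype Y] (p : Y → ℝ) (L : U → Y → ℝ) : ℝ :=
  sInf (Set.range fun u => elloss p (L u))

/-- `L` embeds the discrete loss `ℓ`. -/
def Embeds {R Y : Type*} [Fintype Y] {d : ℕ}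
    (L : (Fin d → ℝ) → Y → ℝ) (ℓ : R → Y → ℝ) : Prop :=
  ∃ φ : R → (Fin d → ℝ), Function.Injective φ ∧ (∀ r, L (φ r) = ℓ r) ∧
    ∀ p ∈ probSimplex Y, ∀ r, Minimizes p ℓ r ↔ Minimizes p L (φ r)

/-- A polyhedral convex function: a pointwise maximum of finitely many affine functions. -/
def IsPolyhedralFn {d : ℕ} (g : (Fin d → ℝ) → ℝ) : Prop :=
  ∃ (m : ℕ) (a : Fin (m + 1) → Fin d → ℝ) (b : Fin (m + 1) → ℝ),
    ∀ x, g x = Finset.univ.sup' Finset.univ_nonempty (fun i => ∑ j, a i j * x j + b i)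

/-- Every polyhedral loss embeds some discrete loss. -/
theorem polyhedral_loss_embeds_discrete
    {Y : Type*} [Fintype Y] {d : ℕ}
    (L : (Fin d → ℝ) → Y → ℝ) (hL0 : ∀ u y, 0 ≤ L u y)
    (hpoly : ∀ y, IsPolyhedralFn (fun u => L u y)) :
    ∃ (m : ℕ) (ℓ : Fin (m + 1) → Y → ℝ), (∀ r y, 0 ≤ ℓ r y) ∧ Embeds L ℓ := by
  classical
  choose mm aa bb hab' using hpoly
  have hab : ∀ (y : Y) (x : Fin d → ℝ), L x y =
      Finset.univ.sup' Finset.univ_nonempty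
        (fun i => ∑ j, aa y i j * x j + bb y i) := hab'
  set A := Amap mm aa with hA
  set B : ((y : Y) × Fin (mm y + 1)) → ℝ := fun k => bb k.1 k.2 with hB
  -- feasibility characterization
  have hfeas_iff : ∀ z : (Fin d → ℝ) × (Y → ℝ),
      Feas A B z ↔ ∀ y, L z.1 y ≤ z.2 y := by
    intro z
    constructor
    · intro h y
      rw [hab y z.1]
      apply Finset.sup'_le
      intro i _
      have := h ⟨y, i⟩
      rw [hA, Amap_apply] at this
      simp only [hB] at this
      linarith
    · intro h k
      have h1 := h k.1
      rw [hab k.1 z.1] at h1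
      have h2 := Finset.le_sup' (fun i => ∑ j, aa k.1 i j * z.1 j + bb k.1 i)
        (Finset.mem_univ k.2)
      rw [hA, Amap_apply]
      simp only [hB]
      have h3 : (∑ j, aa k.1 k.2 j * z.1 j) + bb k.1 k.2 ≤ z.2 k.1 :=
        le_trans h2 h1
      linarith
  -- candidate finite sets
  set Cf : Finset ((Fin d → ℝ) × (Y → ℝ)) :=
    ((Finset.univ : Finset (Finset ((y : Y) × Fin (mm y + 1)))).image
      (cand A B)).filter (fun v => Feas A B v) with hCf
  have hmemCf : ∀ J, Feas A B (cand A B J) → cand A B J ∈ Cf := by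
    intro J hJ
    rw [hCf]
    exact Finset.mem_filter.mpr
      ⟨Finset.mem_image_of_mem _ (Finset.mem_univ J), hJ⟩
  have hz0 : Feas A B ((0 : Fin d → ℝ), fun y => L 0 y) :=
    (hfeas_iff _).mpr fun y => le_refl _
  have hCf_ne : Cf.Nonempty := by
    obtain ⟨J, hJf, _⟩ := candidates_main A B 0 (fun z _ => by simp) _ hz0
    exact ⟨cand A B J, hmemCf J hJf⟩
  set S : Finset (Fin d → ℝ) := Cf.image Prod.fst with hS
  have hS_ne : S.Nonempty := hCf_ne.image _
  have hm : S.card = S.card - 1 + 1 := (Nat.succ_pred_eq_of_pos hS_ne.card_pos).symm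
  set φ : Fin (S.card - 1 + 1) → (Fin d → ℝ) :=
    fun r => (S.equivFin.symm (Fin.cast hm.symm r) : _) with hφ
  have hφinj : Function.Injective φ := by
    intro r s h
    have h1 := S.equivFin.symm.injective (Subtype.coe_injective h)
    have h2 : (Fin.cast hm.symm r).val = (Fin.cast hm.symm s).val := by rw [h1]
    exact Fin.ext h2
  have hφsurj : ∀ x ∈ S, ∃ r, φ r = x := by
    intro x hx
    refine ⟨Fin.cast hm (S.equivFin ⟨x, hx⟩), ?_⟩
    show ((S.equivFin.symm (Fin.cast hm.symm (Fin.cast hm (S.equivFin ⟨x, hx⟩)))) : _) = x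
    have hcast : Fin.cast hm.symm (Fin.cast hm (S.equivFin ⟨x, hx⟩)) =
        S.equivFin ⟨x, hx⟩ := rfl
    rw [hcast, Equiv.symm_apply_apply]
  refine ⟨S.card - 1, fun r => L (φ r), fun r y => hL0 _ y, φ, hφinj,
    fun r => rfl, ?_⟩
  intro p hp r
  obtain ⟨hp0, _⟩ := hp
  have hbd : ∀ z, Feas A B z → 0 ≤ cmap p z := by
    intro z hz
    rw [cmap_apply]
    exact Finset.sum_nonneg fun y _ =>
      mul_nonneg (hp0 y) (le_trans (hL0 z.1 y) ((hfeas_iff z).mp hz y))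
  obtain ⟨vmin, hvmem, hvmin⟩ := Cf.exists_min_image (fun v => cmap p v) hCf_ne
  have hvfeas : Feas A B vmin := (Finset.mem_filter.mp hvmem).2
  have hglobal : ∀ u, elloss p (L vmin.1) ≤ elloss p (L u) := by
    intro u
    have hzu : Feas A B (u, fun y => L u y) := (hfeas_iff _).mpr fun y => le_refl _
    obtain ⟨J, hJf, hJle⟩ := candidates_main A B (cmap p) hbd _ hzu
    have h1 : elloss p (L vmin.1) ≤ cmap p vmin := by
      rw [cmap_apply]
      exact Finset.sum_le_sum fun y _ =>
        mul_le_mul_of_nonneg_left ((hfeas_iff _).mp hvfeas y) (hp0 y)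
    have h2 : cmap p (u, fun y => L u y) = elloss p (L u) := rfl
    calc elloss p (L vmin.1) ≤ cmap p vmin := h1
      _ ≤ cmap p (cand A B J) := hvmin _ (hmemCf J hJf)
      _ ≤ cmap p (u, fun y => L u y) := hJle
      _ = elloss p (L u) := h2
  obtain ⟨r₀, hr₀⟩ := hφsurj vmin.1 (Finset.mem_image_of_mem _ hvmem)
  constructor
  · intro h u
    calc elloss p (L (φ r)) ≤ elloss p (L (φ r₀)) := h r₀
      _ = elloss p (L vmin.1) := by rw [hr₀]
      _ ≤ elloss p (L u) := hglobal u
  · intro h r'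
    exact h (φ r')
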